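/- Let m≥1 be an integer, γ≥0 and δ>0. Then lim_{R→∞}∫_{−R}^{R} exp(−ir²)·(r+γ+iδ)^{−m} dr = exp(i(m−1)π/4)·∫_ℝ exp(−s²)·( s + (γ−δ)/√2 + i(γ+δ)/√2 )^{−m} ds, where the integral on the right converges absolutely. -/

import Mathlib

open Complex MeasureTheory Filter Topology Set intervalIntegral

noncomputable section

namespace S7

/-- the integrand on the original line -/
def f (m : ℕ) (γ δ : ℝ) (z : ℂ) : ℂ :=
  Complex.exp (-I * z ^ 2) * (z + γ + I * δ) ^ (-(m : ℤ))

/-- unit `e^{iy}` -/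
def E (y : ℝ) : ℂ := Complex.exp (y * I)

lemma abs_E (y : ℝ) : ‖E y‖ = 1 := by
  simp [E, Complex.norm_exp]

lemma E_ne_zero (y : ℝ) : E y ≠ 0 := Complex.exp_ne_zero _

lemma exp_eq (x y : ℝ) : Complex.exp (x + y * I) = (Real.exp x : ℂ) * E y := by
  rw [Complex.exp_add, Complex.ofReal_exp, E]

end S7
namespace S7

lemma f_diff {m : ℕ} {γ δ : ℝ} {z : ℂ} (hz : z + γ + I * δ ≠ 0) :
    DifferentiableAt ℂ (f m γ δ) z := by
  apply DifferentiableAt.mul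
  · exact Complex.differentiable_exp.differentiableAt.comp z
      (((differentiable_pow 2).differentiableAt).const_mul (-I))
  · have h1 : DifferentiableAt ℂ (fun w : ℂ => w ^ (-(m : ℤ))) (z + γ + I * δ) :=
      differentiableAt_zpow.mpr (Or.inl hz)
    exact h1.comp z (((differentiableAt_id.add_const _).add_const _))

lemma f_cont {m : ℕ} {γ δ : ℝ} {z : ℂ} (hz : z + γ + I * δ ≠ 0) :
    ContinuousAt (f m γ δ) z := (f_diff hz).continuousAt

lemma norm_f (m : ℕ) (γ δ : ℝ) (z : ℂ) :
    ‖f m γ δ z‖ = Real.exp ((z ^ 2).im) * ‖z + γ + I * δ‖ ^ (-(m : ℤ)) := by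
  rw [f, norm_mul, norm_zpow, Complex.norm_exp]
  norm_num

end S7
namespace S7

lemma g_integrable (m : ℕ) (c : ℂ) (hc : 0 < c.im) :
    Integrable (fun s : ℝ => Complex.exp (-(s : ℂ) ^ 2) * ((s : ℂ) + c) ^ (-(m : ℤ))) := by
  have hne : ∀ s : ℝ, (s : ℂ) + c ≠ 0 := by
    intro s h
    have := congrArg Complex.im h
    simp at this
    exact hc.ne' this
  have hcont : Continuous (fun s : ℝ => Complex.exp (-(s : ℂ) ^ 2) * ((s : ℂ) + c) ^ (-(m : ℤ))) := by
    apply Continuous.mul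
    · exact Complex.continuous_exp.comp ((continuous_ofReal.pow 2).neg)
    · apply ContinuousOn.comp_continuous (continuousOn_zpow₀ _) (continuous_ofReal.add continuous_const)
      intro s; simpa using hne s
  have hbound : ∀ s : ℝ, ‖Complex.exp (-(s : ℂ) ^ 2) * ((s : ℂ) + c) ^ (-(m : ℤ))‖
      ≤ c.im ^ (-(m : ℤ)) * Real.exp (-1 * s ^ 2) := by
    intro s
    rw [norm_mul, norm_zpow, Complex.norm_exp]
    have h1 : (-(s : ℂ) ^ 2).re = -1 * s ^ 2 := by
      rw [← Complex.ofReal_pow, ← Complex.ofReal_neg, Complex.ofReal_re]; ring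
    rw [h1, mul_comm]
    gcongr
    have him : c.im ≤ ‖(s : ℂ) + c‖ := by
      have : ((s : ℂ) + c).im = c.im := by simp
      calc c.im ≤ |((s : ℂ) + c).im| := by rw [this]; exact le_abs_self _
        _ ≤ ‖(s : ℂ) + c‖ := Complex.abs_im_le_norm _
    rw [zpow_neg, zpow_neg, zpow_natCast, zpow_natCast]
    exact inv_anti₀ (pow_pos hc m) (pow_le_pow_left₀ hc.le him m)
  exact (((integrable_exp_neg_mul_sq one_pos).const_mul _).mono'
    hcont.aestronglyMeasurable (Filter.Eventually.of_forall hbound))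

end S7
namespace S7

/-- arc integral at radius `X` -/
def Arc (m : ℕ) (γ δ : ℝ) (X y₁ y₂ : ℝ) : ℂ :=
  ∫ y in y₁..y₂, f m γ δ (X * E y) * (X * E y)

lemma horiz (m : ℕ) (γ δ : ℝ) (a b y : ℝ)
    (hg : ∀ u : ℝ, 0 < u → (u : ℂ) * E y + γ + I * δ ≠ 0) :
    (∫ x in a..b, f m γ δ (Complex.exp (x + y * I)) * Complex.exp (x + y * I)) =
      ∫ u in Real.exp a..Real.exp b, f m γ δ (u * E y) * E y := by
  set g : ℝ → ℂ := fun u => f m γ δ ((u : ℂ) * E y) * E y with hgdef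
  have hgcont : ContinuousOn g (Real.exp '' uIcc a b) := by
    intro u hu
    obtain ⟨x, -, rfl⟩ := hu
    have h0 : (0:ℝ) < Real.exp x := Real.exp_pos x
    have hc2 := ContinuousAt.comp (f := fun u : ℝ => (u : ℂ) * E y) (g := f m γ δ)
      (x := Real.exp x) (f_cont (hg _ h0)) ((continuous_ofReal.mul continuous_const).continuousAt)
    have hc : ContinuousAt g (Real.exp x) := hc2.mul continuousAt_const
    exact hc.continuousWithinAt
  have key := intervalIntegral.integral_comp_smul_deriv'
    (f := Real.exp) (f' := Real.exp) (g := g) (a := a) (b := b)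
    (fun x _ => Real.hasDerivAt_exp x) Real.continuous_exp.continuousOn hgcont
  rw [← key]
  apply intervalIntegral.integral_congr
  intro x _
  show f m γ δ (Complex.exp (x + y * I)) * Complex.exp (x + y * I)
      = Real.exp x • g (Real.exp x)
  rw [exp_eq, hgdef]
  simp only [Complex.real_smul]
  ring

lemma sector (m : ℕ) (γ δ : ℝ) (y₁ y₂ : ℝ)
    (hsec : ∀ (r y : ℝ), 0 < r → y ∈ uIcc y₁ y₂ → (r : ℂ) * E y + γ + I * δ ≠ 0)
    (ε R : ℝ) (hε : 0 < ε) (hR : 0 < R) :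
    (∫ u in ε..R, f m γ δ (u * E y₁) * E y₁) - (∫ u in ε..R, f m γ δ (u * E y₂) * E y₂)
      + I • Arc m γ δ R y₁ y₂ - I • Arc m γ δ ε y₁ y₂ = 0 := by
  set F : ℂ → ℂ := fun w => f m γ δ (Complex.exp w) * Complex.exp w with hFdef
  have hdiff : DifferentiableOn ℂ F
      ((Set.uIcc (Complex.ofReal (Real.log ε) + y₁ * I).re (Complex.ofReal (Real.log R) + y₂ * I).re)
        ×ℂ (Set.uIcc (Complex.ofReal (Real.log ε) + y₁ * I).im (Complex.ofReal (Real.log R) + y₂ * I).im)) := by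
    intro w hw
    rw [Complex.mem_reProdIm] at hw
    have him : w.im ∈ uIcc y₁ y₂ := by simpa using hw.2
    have hne : Complex.exp w + γ + I * δ ≠ 0 := by
      have : Complex.exp w = (Real.exp w.re : ℂ) * E w.im := by
        rw [← exp_eq, Complex.re_add_im]
      rw [this]
      exact hsec _ _ (Real.exp_pos _) him
    have : DifferentiableAt ℂ F w := by
      exact ((f_diff hne).comp w Complex.differentiable_exp.differentiableAt).mul
        Complex.differentiable_exp.differentiableAt
    exact this.differentiableWithinAt
  have key := Complex.integral_boundary_rect_eq_zero_of_differentiableOn F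
    (Complex.ofReal (Real.log ε) + y₁ * I) (Complex.ofReal (Real.log R) + y₂ * I) hdiff
  simp only [Complex.add_re, Complex.add_im, Complex.ofReal_re, Complex.ofReal_im,
    Complex.mul_I_re, Complex.mul_I_im, Complex.ofReal_re, zero_add, add_zero,
    neg_zero, zero_sub, sub_zero] at key
  have hside : ∀ X : ℝ, 0 < X →
      (∫ y in y₁..y₂, F ((Real.log X : ℂ) + y * I)) = Arc m γ δ X y₁ y₂ := by
    intro X hX
    apply intervalIntegral.integral_congr
    intro y _
    show F ((Real.log X : ℂ) + y * I) = _
    rw [hFdef]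
    simp only
    rw [exp_eq, Real.exp_log hX]
  have h₁ := horiz m γ δ (Real.log ε) (Real.log R) y₁ (fun u hu => hsec u y₁ hu left_mem_uIcc)
  have h₂ := horiz m γ δ (Real.log ε) (Real.log R) y₂ (fun u hu => hsec u y₂ hu right_mem_uIcc)
  rw [Real.exp_log hε, Real.exp_log hR] at h₁ h₂
  rw [hside R hR, hside ε hε] at key
  simp only [hFdef] at key
  rw [h₁, h₂] at key
  exact key

end S7
namespace S7
open Real

lemma E_re (y : ℝ) : (E y).re = Real.cos y := by
  simp [E, Complex.exp_ofReal_mul_I_re]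

lemma E_im (y : ℝ) : (E y).im = Real.sin y := by
  simp [E, Complex.exp_ofReal_mul_I_im]

lemma E_mul_re (r y : ℝ) : ((r : ℂ) * E y).re = r * Real.cos y := by
  simp [E, Complex.exp_ofReal_mul_I_re]

lemma E_mul_im (r y : ℝ) : ((r : ℂ) * E y).im = r * Real.sin y := by
  simp [E, Complex.exp_ofReal_mul_I_im]

lemma sec_right {γ δ : ℝ} (hγ : 0 ≤ γ) (hδ : 0 < δ) :
    ∀ (r y : ℝ), 0 < r → y ∈ Set.uIcc (-(π/4)) 0 → (r : ℂ) * E y + γ + I * δ ≠ 0 := by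
  intro r y hr hy h
  rw [Set.uIcc_of_le (neg_nonpos.mpr (by positivity))] at hy
  have hcos : 0 < Real.cos y := by
    apply Real.cos_pos_of_mem_Ioo
    constructor
    · nlinarith [hy.1, Real.pi_pos]
    · nlinarith [hy.2, Real.pi_pos]
  have hre := congrArg Complex.re h
  simp only [Complex.add_re, Complex.mul_re, Complex.I_re, E_re, E_im,
    Complex.I_im, Complex.ofReal_im, Complex.ofReal_re, Complex.zero_re] at hre
  nlinarith [hre, Real.neg_one_le_sin y]

lemma sec_left {γ δ : ℝ} (hγ : 0 ≤ γ) (hδ : 0 < δ) :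
    ∀ (r y : ℝ), 0 < r → y ∈ Set.uIcc (3*π/4) π → (r : ℂ) * E y + γ + I * δ ≠ 0 := by
  intro r y hr hy h
  rw [Set.uIcc_of_le (by nlinarith [Real.pi_pos])] at hy
  have hsin : 0 ≤ Real.sin y := by
    apply Real.sin_nonneg_of_nonneg_of_le_pi
    · nlinarith [hy.1, Real.pi_pos]
    · exact hy.2
  have him := congrArg Complex.im h
  simp only [Complex.add_im, Complex.mul_im, Complex.I_re, E_re, E_im,
    Complex.I_im, Complex.ofReal_re, Complex.ofReal_im, Complex.zero_im] at him
  nlinarith [him]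

lemma sin_est_right : ∀ y ∈ Set.Icc (0 - π/4) 0, Real.sin (2*y) ≤ 4/π * (y - 0) := by
  intro y hy
  have h := Real.mul_le_sin (x := -(2*y)) (by linarith [hy.2]) (by linarith [hy.1])
  rw [Real.sin_neg] at h
  have hπ := Real.pi_pos
  rw [sub_zero]
  have : 2/π * (-(2*y)) = -(4/π*y) := by ring
  linarith [this ▸ h]

lemma sin_est_left : ∀ y ∈ Set.Icc (π - π/4) π, Real.sin (2*y) ≤ 4/π * (y - π) := by
  intro y hy
  have h := Real.mul_le_sin (x := 2*π - 2*y) (by linarith [hy.2]) (by linarith [hy.1])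
  have hs : Real.sin (2*π - 2*y) = -Real.sin (2*y) := by
    rw [show 2*π - 2*y = -(2*y) + 2*π by ring, Real.sin_add_two_pi, Real.sin_neg]
  rw [hs] at h
  have hπ := Real.pi_pos
  have : 2/π * (2*π - 2*y) = -(4/π * (y - π)) := by field_simp; ring
  linarith [this ▸ h]

end S7
namespace S7
open Real

lemma int_exp_bound (a Y : ℝ) (ha : 0 < a) :
    |∫ y in (Y - π/4)..Y, Real.exp (a * (y - Y))| ≤ a⁻¹ := by
  have h1 : (∫ y in (Y - π/4)..Y, Real.exp (a * (y - Y)))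
      = ∫ y in (-(π/4))..0, Real.exp (a * y) := by
    have := intervalIntegral.integral_comp_sub_right (a := Y - π/4) (b := Y)
      (fun y => Real.exp (a * y)) Y
    simpa using this
  have h2 : (∫ y in (-(π/4))..0, Real.exp (a * y)) = a⁻¹ * (1 - Real.exp (-(a * (π/4)))) := by
    rw [intervalIntegral.integral_comp_mul_left (fun y => Real.exp y) ha.ne']
    simp [integral_exp, mul_comm]
  rw [h1, h2, _root_.abs_of_nonneg]
  · have : 0 ≤ Real.exp (-(a * (π/4))) := (Real.exp_pos _).le
    have h3 : 1 - Real.exp (-(a * (π/4))) ≤ 1 := by linarith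
    calc a⁻¹ * (1 - Real.exp (-(a * (π/4)))) ≤ a⁻¹ * 1 := by
          apply mul_le_mul_of_nonneg_left h3 (by positivity)
      _ = a⁻¹ := mul_one _
  · have h6 : Real.exp (-(a * (π/4))) ≤ 1 := by
      rw [Real.exp_le_one_iff]
      nlinarith [Real.pi_pos]
    have h7 : 0 ≤ 1 - Real.exp (-(a * (π/4))) := by linarith
    positivity

lemma norm_arc_le (m : ℕ) (hm : 1 ≤ m) (γ δ : ℝ) (Y : ℝ)
    (hsin : ∀ y ∈ Set.Icc (Y - π/4) Y, Real.sin (2*y) ≤ 4/π * (y - Y))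
    (R : ℝ) (hR : ‖(γ : ℂ) + I * δ‖ + 1 ≤ R) :
    ‖Arc m γ δ R (Y - π/4) Y‖ ≤ R * (R - ‖(γ : ℂ) + I * δ‖)⁻¹ * (π / (4 * R^2)) := by
  set C := ‖(γ : ℂ) + I * δ‖ with hC
  have hC0 : 0 ≤ C := norm_nonneg _
  have hR1 : 1 ≤ R - C := by linarith
  have hR0 : 0 < R := by linarith
  have hπ := Real.pi_pos
  set a : ℝ := 4/π * R^2 with ha
  have ha0 : 0 < a := by positivity
  -- pointwise bound
  have hpt : ∀ y ∈ Set.uIoc (Y - π/4) Y,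
      ‖f m γ δ ((R : ℝ) * E y) * ((R : ℝ) * E y)‖
        ≤ R * (R - C)⁻¹ * Real.exp (a * (y - Y)) := by
    intro y hy
    have hyIcc : y ∈ Set.Icc (Y - π/4) Y := by
      rw [Set.uIoc_of_le (by linarith)] at hy
      exact ⟨hy.1.le, hy.2⟩
    have hnorm1 : ‖(R : ℂ) * E y‖ = R := by
      rw [norm_mul, abs_E, Complex.norm_real, Real.norm_eq_abs, abs_of_pos hR0, mul_one]
    have hden : R - C ≤ ‖(R : ℂ) * E y + γ + I * δ‖ := by
      have h1 : ‖(R : ℂ) * E y‖ ≤ ‖(R : ℂ) * E y + γ + I * δ‖ + ‖(γ : ℂ) + I * δ‖ := by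
        calc ‖(R : ℂ) * E y‖ = ‖((R : ℂ) * E y + γ + I * δ) + (-((γ : ℂ) + I * δ))‖ := by
              ring_nf
          _ ≤ _ := by rw [← norm_neg ((γ:ℂ) + I*δ)] ; exact norm_add_le _ _
      have h2 : ‖(R : ℂ) * E y‖ = R := by rw [hnorm1]
      have h3 : ‖(γ : ℂ) + I * δ‖ = C := by rw [hC]
      linarith [h1, h2.symm ▸ h1]
    have hden1 : 1 ≤ ‖(R : ℂ) * E y + γ + I * δ‖ := le_trans hR1 hden
    have hsq : (((R : ℂ) * E y) ^ 2).im = R^2 * Real.sin (2*y) := by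
      have hE : E y * E y = E (2*y) := by
        simp only [E, ← Complex.exp_add]
        push_cast
        ring_nf
      have : ((R : ℂ) * E y) ^ 2 = ((R^2 : ℝ) : ℂ) * E (2*y) := by
        rw [mul_pow, pow_two (E y), hE]
        push_cast
        ring
      rw [this, E_mul_im]
    rw [norm_mul, norm_f, hsq]
    have hzpow : ‖(R : ℂ) * E y + γ + I * δ‖ ^ (-(m : ℤ)) ≤ (R - C)⁻¹ := by
      rw [zpow_neg, zpow_natCast]
      have h4 : R - C ≤ ‖(R : ℂ) * E y + γ + I * δ‖ ^ m := by
        calc R - C ≤ ‖(R : ℂ) * E y + γ + I * δ‖ := hden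
          _ = ‖(R : ℂ) * E y + γ + I * δ‖ ^ 1 := (pow_one _).symm
          _ ≤ ‖(R : ℂ) * E y + γ + I * δ‖ ^ m := pow_le_pow_right₀ hden1 hm
      exact inv_anti₀ (by linarith) h4
    have hexp : Real.exp (R^2 * Real.sin (2*y)) ≤ Real.exp (a * (y - Y)) := by
      apply Real.exp_le_exp.mpr
      have := hsin y hyIcc
      calc R^2 * Real.sin (2*y) ≤ R^2 * (4/π * (y - Y)) := by nlinarith [sq_nonneg R]
        _ = a * (y - Y) := by ring
    have hnR : ‖(R : ℂ) * E y‖ = R := by rw [hnorm1]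
    calc Real.exp (R^2 * Real.sin (2*y)) * ‖(R : ℂ) * E y + γ + I * δ‖ ^ (-(m : ℤ))
          * ‖(R : ℂ) * E y‖
        ≤ Real.exp (a * (y - Y)) * (R - C)⁻¹ * R := by
          have hz0 : (0:ℝ) ≤ ‖(R : ℂ) * E y + γ + I * δ‖ ^ (-(m : ℤ)) := by positivity
          apply mul_le_mul (mul_le_mul hexp hzpow hz0 (Real.exp_pos _).le) (le_of_eq hnR)
            (norm_nonneg _) (by positivity)
      _ = R * (R - C)⁻¹ * Real.exp (a * (y - Y)) := by ring
  have hbint : IntervalIntegrable (fun y => R * (R - C)⁻¹ * Real.exp (a * (y - Y)))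
      volume (Y - π/4) Y := by
    apply Continuous.intervalIntegrable
    continuity
  have key := intervalIntegral.norm_integral_le_of_norm_le
    (f := fun y => f m γ δ ((R : ℝ) * E y) * ((R : ℝ) * E y))
    (μ := volume) (a := Y - π/4) (b := Y) (by linarith)
    (Filter.Eventually.of_forall (fun y hy => hpt y (by rwa [Set.uIoc_of_le (by linarith)]))) hbint
  have hval : |∫ y in (Y - π/4)..Y, R * (R - C)⁻¹ * Real.exp (a * (y - Y))|
      ≤ R * (R - C)⁻¹ * a⁻¹ := by
    have : (∫ y in (Y - π/4)..Y, R * (R - C)⁻¹ * Real.exp (a * (y - Y)))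
        = R * (R - C)⁻¹ * ∫ y in (Y - π/4)..Y, Real.exp (a * (y - Y)) := by
      rw [← intervalIntegral.integral_const_mul]
    rw [this, abs_mul]
    have h5 : |R * (R - C)⁻¹| = R * (R - C)⁻¹ := abs_of_pos (by positivity)
    rw [h5]
    exact mul_le_mul_of_nonneg_left (int_exp_bound a Y ha0) (by positivity)
  have hfin : R * (R - C)⁻¹ * a⁻¹ = R * (R - C)⁻¹ * (π / (4 * R^2)) := by
    rw [ha]
    field_simp
  rw [Arc]
  calc ‖∫ y in (Y - π/4)..Y, f m γ δ ((R:ℝ) * E y) * ((R:ℝ) * E y)‖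
      ≤ |∫ y in (Y - π/4)..Y, R * (R - C)⁻¹ * Real.exp (a * (y - Y))| := key.trans (le_abs_self _)
    _ ≤ R * (R - C)⁻¹ * a⁻¹ := hval
    _ = _ := hfin

end S7
namespace S7
open Real

lemma arc_atTop (m : ℕ) (hm : 1 ≤ m) (γ δ : ℝ) (Y : ℝ)
    (hsin : ∀ y ∈ Set.Icc (Y - π/4) Y, Real.sin (2*y) ≤ 4/π * (y - Y)) :
    Tendsto (fun R : ℝ => Arc m γ δ R (Y - π/4) Y) atTop (𝓝 0) := by
  set C := ‖(γ : ℂ) + I * δ‖ with hC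
  have hC0 : 0 ≤ C := norm_nonneg _
  have hπ := Real.pi_pos
  apply squeeze_zero_norm' (a := fun R => π/2 * (R^2)⁻¹)
  · filter_upwards [Filter.eventually_ge_atTop (C + 1), Filter.eventually_ge_atTop (2*C)]
      with R h1 h2
    have hR0 : 0 < R := by linarith
    have hRC : 0 < R - C := by linarith
    calc ‖Arc m γ δ R (Y - π/4) Y‖ ≤ R * (R - C)⁻¹ * (π / (4 * R^2)) :=
          norm_arc_le m hm γ δ Y hsin R h1
      _ ≤ π/2 * (R^2)⁻¹ := by
          have h3 : (R - C)⁻¹ ≤ 2/R := by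
            rw [inv_eq_one_div, div_le_div_iff₀ hRC hR0]
            linarith
          calc R * (R - C)⁻¹ * (π / (4 * R^2)) ≤ R * (2/R) * (π / (4 * R^2)) := by
                apply mul_le_mul_of_nonneg_right (mul_le_mul_of_nonneg_left h3 hR0.le)
                  (by positivity)
            _ = π/2 * (R^2)⁻¹ := by field_simp; ring
  · have h4 : Tendsto (fun R : ℝ => (R^2)⁻¹) atTop (𝓝 0) :=
      tendsto_inv_atTop_zero.comp (tendsto_pow_atTop (two_ne_zero))
    have := h4.const_mul (π/2)
    simpa using this

lemma arc_nhds_zero (m : ℕ) (γ δ : ℝ) (hδ : 0 < δ) (y₁ y₂ : ℝ) :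
    Tendsto (fun ε : ℝ => Arc m γ δ ε y₁ y₂) (𝓝[>] 0) (𝓝 0) := by
  set K : ℝ := ((δ/2)^m)⁻¹ with hK
  have hK0 : 0 < K := by positivity
  apply squeeze_zero_norm' (a := fun ε => (Real.exp 1 * K * |y₂ - y₁|) * ε)
  · have hmem : Set.Ioo (0:ℝ) (min (δ/2) 1) ∈ 𝓝[>] (0:ℝ) := by
      apply Ioo_mem_nhdsGT_of_mem
      constructor
      · exact le_refl _
      · positivity
    filter_upwards [hmem] with ε hε
    have hε0 : 0 < ε := hε.1
    have hεδ : ε ≤ δ/2 := le_of_lt (lt_of_lt_of_le hε.2 (min_le_left _ _))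
    have hε1 : ε ≤ 1 := le_of_lt (lt_of_lt_of_le hε.2 (min_le_right _ _))
    have hpt : ∀ y ∈ Set.uIoc y₁ y₂,
        ‖f m γ δ ((ε : ℝ) * E y) * ((ε : ℝ) * E y)‖ ≤ Real.exp 1 * K * ε := by
      intro y _
      have habs : ‖(ε : ℂ) * E y‖ = ε := by
        rw [norm_mul, abs_E, Complex.norm_real, Real.norm_eq_abs, _root_.abs_of_pos hε0, mul_one]
      have him : δ/2 ≤ ‖(ε : ℂ) * E y + γ + I * δ‖ := by
        have h1 : ((ε : ℂ) * E y + γ + I * δ).im = ε * Real.sin y + δ := by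
          simp [Complex.add_im, Complex.mul_im, E_re, E_im, Complex.I_re, Complex.I_im,
            Complex.ofReal_im, Complex.ofReal_re]
        have h2 : δ/2 ≤ |ε * Real.sin y + δ| := by
          have := Real.neg_one_le_sin y
          have h3 : ε * Real.sin y ≥ -ε := by nlinarith
          rw [_root_.abs_of_nonneg (by nlinarith)]
          nlinarith
        calc δ/2 ≤ |((ε : ℂ) * E y + γ + I * δ).im| := by rw [h1]; exact h2
          _ ≤ ‖(ε : ℂ) * E y + γ + I * δ‖ := Complex.abs_im_le_norm _
      have hzpow : ‖(ε : ℂ) * E y + γ + I * δ‖ ^ (-(m:ℤ)) ≤ K := by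
        rw [zpow_neg, zpow_natCast, hK]
        exact inv_anti₀ (by positivity) (pow_le_pow_left₀ (by positivity) him m)
      have hexp : Real.exp ((((ε : ℂ) * E y)^2).im) ≤ Real.exp 1 := by
        apply Real.exp_le_exp.mpr
        calc (((ε : ℂ) * E y)^2).im ≤ |(((ε : ℂ) * E y)^2).im| := le_abs_self _
          _ ≤ ‖((ε : ℂ) * E y)^2‖ := Complex.abs_im_le_norm _
          _ = ε^2 := by rw [norm_pow, habs]
          _ ≤ 1 := by nlinarith
      have hnε : ‖(ε : ℂ) * E y‖ = ε := by rw [habs]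
      rw [norm_mul, norm_f, hnε]
      have h8 : Real.exp ((((ε : ℂ) * E y)^2).im) * ‖(ε : ℂ) * E y + γ + I * δ‖ ^ (-(m:ℤ))
          ≤ Real.exp 1 * K :=
        mul_le_mul hexp hzpow (by positivity) (Real.exp_pos _).le
      exact mul_le_mul_of_nonneg_right h8 hε0.le
    have hb := intervalIntegral.norm_integral_le_of_norm_le_const hpt
    exact hb.trans_eq (by ring)
  · have hcont : Tendsto (fun ε : ℝ => (Real.exp 1 * K * |y₂ - y₁|) * ε) (𝓝 0)
        (𝓝 ((Real.exp 1 * K * |y₂ - y₁|) * 0)) :=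
      (continuous_const.mul continuous_id).tendsto 0
    rw [mul_zero] at hcont
    exact hcont.mono_left nhdsWithin_le_nhds

end S7
namespace S7
open Real

lemma small_int {h : ℝ → ℂ} (hc : Continuous h) :
    Tendsto (fun ε : ℝ => ∫ x in (-ε)..ε, h x) (𝓝[>] 0) (𝓝 0) := by
  have hP : Continuous (fun b : ℝ => ∫ x in (0:ℝ)..b, h x) :=
    intervalIntegral.continuous_primitive (fun a b => hc.intervalIntegrable a b) 0
  have heq : ∀ ε : ℝ, (∫ x in (-ε)..ε, h x)
      = (∫ x in (0:ℝ)..ε, h x) - ∫ x in (0:ℝ)..(-ε), h x := by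
    intro ε
    rw [intervalIntegral.integral_interval_sub_left (hc.intervalIntegrable _ _)
      (hc.intervalIntegrable _ _)]
  have : Tendsto (fun ε : ℝ => (∫ x in (0:ℝ)..ε, h x) - ∫ x in (0:ℝ)..(-ε), h x) (𝓝 0) (𝓝 0) := by
    have := (hP.sub (hP.comp continuous_neg)).tendsto 0
    simpa [Pi.sub_def, Function.comp_def] using this
  exact ((this.congr (fun ε => (heq ε).symm)).mono_left nhdsWithin_le_nhds)

lemma E_add (a b : ℝ) : E (a + b) = E a * E b := by
  simp only [E, ← Complex.exp_add]
  push_cast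
  ring_nf

lemma E_zero : E 0 = 1 := by simp [E]

lemma E_pi : E π = -1 := by
  rw [E, Complex.exp_pi_mul_I]

lemma E_3pi4 : E (3*π/4) = -E (-(π/4)) := by
  have h : E (-(π/4) + π) = E (-(π/4)) * E π := E_add _ _
  rw [E_pi, show -(π/4) + π = 3*π/4 by ring] at h
  rw [h]; ring

lemma f_real_cont (m : ℕ) (γ δ : ℝ) (hδ : 0 < δ) :
    Continuous (fun r : ℝ => f m γ δ (r : ℂ)) := by
  rw [continuous_iff_continuousAt]
  intro r
  have hne : (r : ℂ) + γ + I * δ ≠ 0 := by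
    intro h
    have := congrArg Complex.im h
    simp [Complex.add_im, Complex.mul_im] at this
    exact hδ.ne' this
  exact (f_cont hne).comp continuous_ofReal.continuousAt

lemma rot_ne {γ δ : ℝ} (hγ : 0 ≤ γ) (hδ : 0 < δ) (s : ℝ) :
    (s : ℂ) * E (-(π/4)) + γ + I * δ ≠ 0 := by
  rcases lt_or_ge 0 s with hs | hs
  · exact sec_right hγ hδ s _ hs Set.left_mem_uIcc
  · intro h
    have him := congrArg Complex.im h
    simp only [Complex.add_im, Complex.mul_im, E_re, E_im, Complex.I_re, Complex.I_im,
      Complex.ofReal_re, Complex.ofReal_im, Complex.zero_im] at him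
    have hsin : Real.sin (-(π/4)) = -(Real.sqrt 2 / 2) := by
      rw [Real.sin_neg, Real.sin_pi_div_four]
    rw [hsin] at him
    nlinarith [Real.sqrt_nonneg 2, him]

lemma rot_cont (m : ℕ) {γ δ : ℝ} (hγ : 0 ≤ γ) (hδ : 0 < δ) :
    Continuous (fun s : ℝ => f m γ δ ((s : ℂ) * E (-(π/4))) * E (-(π/4))) := by
  rw [continuous_iff_continuousAt]
  intro s
  apply ContinuousAt.mul _ continuousAt_const
  exact ContinuousAt.comp (f := fun s : ℝ => (s : ℂ) * E (-(π/4))) (g := f m γ δ)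
    (f_cont (rot_ne hγ hδ s)) ((continuous_ofReal.mul continuous_const).continuousAt)

lemma fixedR (m : ℕ) {γ δ : ℝ} (hγ : 0 ≤ γ) (hδ : 0 < δ) (R : ℝ) (hR : 0 < R) :
    (∫ r in (-R)..R, f m γ δ (r : ℂ))
      = (∫ s in (-R)..R, f m γ δ ((s : ℂ) * E (-(π/4))) * E (-(π/4)))
        + I * Arc m γ δ R (-(π/4)) 0 - I * Arc m γ δ R (3*π/4) π := by
  have hπ := Real.pi_pos
  have hfc := f_real_cont m γ δ hδ
  have hgc := rot_cont m hγ hδ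
  -- the ε-dependent right-hand side
  set Ψ : ℝ → ℂ := fun ε => (∫ x in (-ε)..ε, f m γ δ (x : ℂ))
      - (∫ s in (-ε)..ε, f m γ δ ((s : ℂ) * E (-(π/4))) * E (-(π/4)))
      - I * Arc m γ δ ε (-(π/4)) 0 + I * Arc m γ δ ε (3*π/4) π with hΨ
  have hΨ0 : Tendsto Ψ (𝓝[>] 0) (𝓝 0) := by
    rw [hΨ]
    have h1 := small_int hfc
    have h2 := small_int hgc
    have h3 := (arc_nhds_zero m γ δ hδ (-(π/4)) 0).const_mul I
    have h4 := (arc_nhds_zero m γ δ hδ (3*π/4) π).const_mul I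
    have := ((h1.sub h2).sub h3).add h4
    simpa using this
  have heq : ∀ᶠ ε in 𝓝[>] (0:ℝ),
      (∫ r in (-R)..R, f m γ δ (r : ℂ))
        - (∫ s in (-R)..R, f m γ δ ((s : ℂ) * E (-(π/4))) * E (-(π/4)))
        - I * Arc m γ δ R (-(π/4)) 0 + I * Arc m γ δ R (3*π/4) π = Ψ ε := by
    filter_upwards [self_mem_nhdsWithin] with ε (hε : 0 < ε)
    have hSr := sector m γ δ (-(π/4)) 0 (sec_right hγ hδ) ε R hε hR
    have hSl := sector m γ δ (3*π/4) π (sec_left hγ hδ) ε R hε hR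
    simp only [smul_eq_mul] at hSr hSl
    have ha : (∫ u in ε..R, f m γ δ ((u:ℂ) * E 0) * E 0) = ∫ u in ε..R, f m γ δ (u:ℂ) := by
      apply intervalIntegral.integral_congr
      intro u _
      simp only [E_zero, mul_one]
    have hb : (∫ u in ε..R, f m γ δ ((u:ℂ) * E π) * E π)
        = -∫ x in (-R)..(-ε), f m γ δ (x:ℂ) := by
      have h1 : ∀ u : ℝ, f m γ δ ((u:ℂ) * E π) * E π
          = -(f m γ δ (((-u : ℝ) : ℂ))) := by
        intro u
        rw [E_pi]
        have harg : (u:ℂ) * (-1) = (((-u : ℝ)) : ℂ) := by push_cast; ring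
        rw [harg]; ring
      calc (∫ u in ε..R, f m γ δ ((u:ℂ) * E π) * E π)
          = ∫ u in ε..R, -(f m γ δ (((-u : ℝ)) : ℂ)) :=
            intervalIntegral.integral_congr (fun u _ => h1 u)
        _ = -∫ u in ε..R, f m γ δ (((-u : ℝ)) : ℂ) := intervalIntegral.integral_neg
        _ = -∫ x in (-R)..(-ε), f m γ δ (x : ℂ) := by
            rw [intervalIntegral.integral_comp_neg (fun x : ℝ => f m γ δ (x : ℂ))]
    have hc : (∫ u in ε..R, f m γ δ ((u:ℂ) * E (3*π/4)) * E (3*π/4))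
        = -∫ s in (-R)..(-ε), f m γ δ ((s : ℂ) * E (-(π/4))) * E (-(π/4)) := by
      have h2 : ∀ u : ℝ, f m γ δ ((u:ℂ) * E (3*π/4)) * E (3*π/4)
          = -(f m γ δ ((((-u : ℝ)) : ℂ) * E (-(π/4))) * E (-(π/4))) := by
        intro u
        rw [E_3pi4]
        have harg : (u:ℂ) * (-E (-(π/4))) = (((-u : ℝ)) : ℂ) * E (-(π/4)) := by
          push_cast; ring
        rw [harg]; ring
      calc (∫ u in ε..R, f m γ δ ((u:ℂ) * E (3*π/4)) * E (3*π/4))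
          = ∫ u in ε..R, -(f m γ δ ((((-u : ℝ)) : ℂ) * E (-(π/4))) * E (-(π/4))) :=
            intervalIntegral.integral_congr (fun u _ => h2 u)
        _ = -∫ u in ε..R, f m γ δ ((((-u : ℝ)) : ℂ) * E (-(π/4))) * E (-(π/4)) :=
            intervalIntegral.integral_neg
        _ = -∫ s in (-R)..(-ε), f m γ δ ((s : ℂ) * E (-(π/4))) * E (-(π/4)) := by
            rw [intervalIntegral.integral_comp_neg
              (fun s : ℝ => f m γ δ ((s : ℂ) * E (-(π/4))) * E (-(π/4)))]
    rw [ha] at hSr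
    rw [hb, hc] at hSl
    have t1f := intervalIntegral.integral_add_adjacent_intervals
      (hfc.intervalIntegrable (μ := volume) (-R) (-ε)) (hfc.intervalIntegrable (μ := volume) (-ε) ε)
    have t2f := intervalIntegral.integral_add_adjacent_intervals
      (hfc.intervalIntegrable (μ := volume) (-R) ε) (hfc.intervalIntegrable (μ := volume) ε R)
    have t1g := intervalIntegral.integral_add_adjacent_intervals
      (hgc.intervalIntegrable (μ := volume) (-R) (-ε)) (hgc.intervalIntegrable (μ := volume) (-ε) ε)
    have t2g := intervalIntegral.integral_add_adjacent_intervals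
      (hgc.intervalIntegrable (μ := volume) (-R) ε) (hgc.intervalIntegrable (μ := volume) ε R)
    rw [hΨ]
    linear_combination -hSr + hSl - t1f - t2f + t1g + t2g
  have hconst := (Filter.Tendsto.congr' heq tendsto_const_nhds)
  have hD := tendsto_nhds_unique hconst hΨ0
  linear_combination hD

end S7
namespace S7
open Real

lemma E_eq (y : ℝ) : E y = (Real.cos y : ℂ) + (Real.sin y : ℂ) * I := by
  rw [E, Complex.exp_mul_I, ← Complex.ofReal_cos, ← Complex.ofReal_sin]

lemma E_sq : E (-(π/4)) ^ 2 = -I := by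
  rw [pow_two, ← E_add, show -(π/4) + -(π/4) = -(π/2) by ring, E_eq]
  rw [Real.cos_neg, Real.sin_neg, Real.cos_pi_div_two, Real.sin_pi_div_two]
  push_cast
  ring

lemma E_inv : E (-(π/4)) * E (π/4) = 1 := by
  rw [← E_add, show -(π/4) + π/4 = 0 by ring, E_zero]

lemma rot_c (γ δ : ℝ) :
    E (π/4) * ((γ : ℂ) + I * δ)
      = (((γ - δ) / Real.sqrt 2 : ℝ) : ℂ) + I * (((γ + δ) / Real.sqrt 2 : ℝ) : ℂ) := by
  have hss : Real.sqrt 2 * Real.sqrt 2 = 2 := Real.mul_self_sqrt (by norm_num)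
  have h2' : Real.sqrt 2 ≠ 0 := by positivity
  have hdiv : ∀ t : ℝ, t / Real.sqrt 2 = Real.sqrt 2 / 2 * t := by
    intro t
    field_simp
    linear_combination (-t) * hss
  calc E (π/4) * ((γ : ℂ) + I * δ)
      = ((Real.sqrt 2/2 : ℝ) : ℂ) * (1 + I) * ((γ : ℂ) + I * δ) := by
        rw [E_eq, Real.cos_pi_div_four, Real.sin_pi_div_four]
        push_cast
        ring
    _ = ((Real.sqrt 2/2 * (γ - δ) : ℝ) : ℂ) + I * ((Real.sqrt 2/2 * (γ + δ) : ℝ) : ℂ) := by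
        push_cast
        have hI2 : I * I = -1 := Complex.I_mul_I
        linear_combination ((Real.sqrt 2 : ℂ)/2 * (δ : ℂ)) * hI2
    _ = _ := by rw [← hdiv, ← hdiv]

lemma rot_integrand (m : ℕ) (γ δ : ℝ) (s : ℝ) :
    f m γ δ ((s : ℂ) * E (-(π/4))) * E (-(π/4))
      = Complex.exp (I * ((m : ℂ) - 1) * (Real.pi : ℂ) / 4) *
        (Complex.exp (-(s : ℂ) ^ 2) *
          ((s : ℂ) + (((γ - δ) / Real.sqrt 2 : ℝ) : ℂ)
            + I * (((γ + δ) / Real.sqrt 2 : ℝ) : ℂ)) ^ (-(m : ℤ))) := by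
  set c : ℂ := (((γ - δ) / Real.sqrt 2 : ℝ) : ℂ) + I * (((γ + δ) / Real.sqrt 2 : ℝ) : ℂ) with hc
  have hsq : -I * ((s : ℂ) * E (-(π/4))) ^ 2 = -(s : ℂ) ^ 2 := by
    rw [mul_pow, E_sq]
    have : I * I = -1 := Complex.I_mul_I
    linear_combination (s:ℂ)^2 * this
  have h5 : E (-(π/4)) * c = (γ : ℂ) + I * δ := by
    rw [hc, ← rot_c γ δ, ← mul_assoc, E_inv, one_mul]
  have harg : (s : ℂ) * E (-(π/4)) + γ + I * δ = E (-(π/4)) * ((s : ℂ) + c) := by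
    linear_combination -h5
  have hK : E (-(π/4)) ^ (-(m : ℤ)) * E (-(π/4))
      = Complex.exp (I * ((m : ℂ) - 1) * (Real.pi : ℂ) / 4) := by
    have h6 : E (-(π/4)) ^ (-(m : ℤ)) * E (-(π/4)) = E (-(π/4)) ^ ((1 : ℤ) - m) := by
      rw [sub_eq_add_neg, zpow_add₀ (E_ne_zero _), zpow_one]
      ring
    rw [h6, E, ← Complex.exp_int_mul]
    congr 1
    push_cast
    ring
  rw [f, hsq, harg, mul_zpow]
  rw [show (s:ℂ) + (((γ - δ) / Real.sqrt 2 : ℝ) : ℂ) + I * (((γ + δ) / Real.sqrt 2 : ℝ) : ℂ)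
    = (s : ℂ) + c by rw [hc]; ring]
  linear_combination (Complex.exp (-(s:ℂ)^2) * ((s:ℂ) + c) ^ (-(m:ℤ))) * hK

end S7
/-- for an integer `m≥1`, `γ≥0` and `δ>0`,
`lim_{R→∞}∫_{−R}^{R} exp(−ir²)·(r+γ+iδ)^{−m} dr
  = exp(i(m−1)π/4)·∫_ℝ exp(−s²)·(s+(γ−δ)/√2+i(γ+δ)/√2)^{−m} ds`,
the right-hand integral converging absolutely. -/
theorem stmt7 (m : ℕ) (hm : 1 ≤ m) (γ δ : ℝ) (hγ : 0 ≤ γ) (hδ : 0 < δ) :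
    Integrable (fun s : ℝ => Complex.exp (-(s : ℂ) ^ 2) *
        ((s : ℂ) + ((γ - δ) / Real.sqrt 2 : ℝ) + I * ((γ + δ) / Real.sqrt 2 : ℝ)) ^ (-(m : ℤ))) ∧
    Tendsto (fun R : ℝ => ∫ r in (-R)..R,
        Complex.exp (-I * (r : ℂ) ^ 2) * ((r : ℂ) + γ + I * δ) ^ (-(m : ℤ))) atTop
      (𝓝 (Complex.exp (I * ((m : ℂ) - 1) * Real.pi / 4) *
        ∫ s : ℝ, Complex.exp (-(s : ℂ) ^ 2) *
          ((s : ℂ) + ((γ - δ) / Real.sqrt 2 : ℝ) + I * ((γ + δ) / Real.sqrt 2 : ℝ))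
            ^ (-(m : ℤ)))) := by
  have hπ := Real.pi_pos
  have hint : Integrable (fun s : ℝ => Complex.exp (-(s : ℂ) ^ 2) *
      ((s : ℂ) + ((γ - δ) / Real.sqrt 2 : ℝ) + I * ((γ + δ) / Real.sqrt 2 : ℝ)) ^ (-(m : ℤ))) := by
    have hB : (0:ℝ) < (γ + δ) / Real.sqrt 2 := by
      apply div_pos (by linarith) (Real.sqrt_pos.mpr (by norm_num))
    have him : (0:ℝ) < ((((γ - δ) / Real.sqrt 2 : ℝ) : ℂ)
        + I * (((γ + δ) / Real.sqrt 2 : ℝ) : ℂ)).im := by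
      simp only [Complex.add_im, Complex.mul_im, Complex.ofReal_im, Complex.I_re, Complex.I_im,
        Complex.ofReal_re]
      simpa using hB
    have := S7.g_integrable m ((((γ - δ) / Real.sqrt 2 : ℝ) : ℂ)
      + I * (((γ + δ) / Real.sqrt 2 : ℝ) : ℂ)) him
    simp only [add_assoc]
    simpa only [add_assoc] using this
  refine ⟨hint, ?_⟩
  set K : ℂ := Complex.exp (I * ((m : ℂ) - 1) * (Real.pi : ℂ) / 4) with hK
  have hTrot := intervalIntegral_tendsto_integral hint tendsto_neg_atTop_atBot tendsto_id
  have hArc1 : Tendsto (fun R : ℝ => S7.Arc m γ δ R (-(Real.pi/4)) 0) atTop (𝓝 0) := by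
    have := S7.arc_atTop m hm γ δ 0 S7.sin_est_right
    simpa using this
  have hArc2 : Tendsto (fun R : ℝ => S7.Arc m γ δ R (3*Real.pi/4) Real.pi) atTop (𝓝 0) := by
    have := S7.arc_atTop m hm γ δ Real.pi S7.sin_est_left
    rwa [show Real.pi - Real.pi/4 = 3*Real.pi/4 by ring] at this
  have hcomb := ((hTrot.const_mul K).add (hArc1.const_mul I)).sub (hArc2.const_mul I)
  simp only [mul_zero, add_zero, sub_zero] at hcomb
  apply Filter.Tendsto.congr' _ hcomb
  filter_upwards [Filter.eventually_gt_atTop (0:ℝ)] with R hR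
  have hfix := S7.fixedR m hγ hδ R hR
  have hrot : (∫ s in (-R)..R, S7.f m γ δ ((s : ℂ) * S7.E (-(Real.pi/4))) * S7.E (-(Real.pi/4)))
      = K * ∫ s in (-R)..R, Complex.exp (-(s : ℂ) ^ 2) *
          ((s : ℂ) + ((γ - δ) / Real.sqrt 2 : ℝ) + I * ((γ + δ) / Real.sqrt 2 : ℝ))
            ^ (-(m : ℤ)) := by
    rw [intervalIntegral.integral_congr (fun s _ => S7.rot_integrand m γ δ s),
      intervalIntegral.integral_const_mul]
  have hL : (∫ r in (-R)..R,
      Complex.exp (-I * (r : ℂ) ^ 2) * ((r : ℂ) + γ + I * δ) ^ (-(m : ℤ)))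
      = ∫ r in (-R)..R, S7.f m γ δ (r : ℂ) := rfl
  rw [hL, hfix, hrot]
  rfl
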